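/- Let {s_n} be a sequence of nonnegative reals satisfying s_{n+1} ≤ (1−α_n)s_n + α_n β_n for n ≥ 0, where α_n ∈ (0,1), Σ α_n = ∞, and Σ_{n=0}^∞ |α_n β_n| < ∞. Then s_n → 0. -/
import Mathlib


open Filter Topology

theorem stmt_2
    (s : ℕ → ℝ) (hs : ∀ n, 0 ≤ s n)
    (a : ℕ → ℝ) (ha : ∀ n, a n ∈ Set.Ioo (0 : ℝ) 1)
    (hadiv : Tendsto (fun n => ∑ i ∈ Finset.range n, a i) atTop atTop)
    (b : ℕ → ℝ) (hb : Summable (fun n => |a n * b n|))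
    (hrec : ∀ n, s (n + 1) ≤ (1 - a n) * s n + a n * b n) :
    Tendsto s atTop (nhds 0) := by
  set c : ℕ → ℝ := fun n => |a n * b n| with hc
  have hcnn : ∀ n, 0 ≤ c n := fun n => abs_nonneg _
  have key : ∀ m n, m ≤ n → s n ≤ (∏ i ∈ Finset.Ico m n, (1 - a i)) * s m
      + ∑ i ∈ Finset.Ico m n, c i := by
    intro m n hmn
    induction n, hmn using Nat.le_induction with
    | base => simp
    | succ n hmn ih =>
      rw [Finset.prod_Ico_succ_top hmn, Finset.sum_Ico_succ_top hmn]
      have ha' := ha n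
      have hS : 0 ≤ ∑ i ∈ Finset.Ico m n, c i := Finset.sum_nonneg fun i _ => hcnn i
      have h1 : s (n+1) ≤ (1 - a n) * s n + c n := by
        calc s (n+1) ≤ (1 - a n) * s n + a n * b n := hrec n
        _ ≤ (1 - a n) * s n + c n := by gcongr; exact le_abs_self _
      have h2 : (1 - a n) * s n ≤ (1 - a n) *
          ((∏ i ∈ Finset.Ico m n, (1 - a i)) * s m + ∑ i ∈ Finset.Ico m n, c i) := by
        apply mul_le_mul_of_nonneg_left ih; linarith [ha'.2]
      nlinarith [ha'.1, ha'.2, hcnn n, hS]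
  rw [Metric.tendsto_atTop]
  intro ε hε
  obtain ⟨m, hm⟩ := Metric.tendsto_atTop.mp hb.hasSum.tendsto_sum_nat (ε/4) (by positivity)
  have htail : ∀ n, m ≤ n → ∑ i ∈ Finset.Ico m n, c i < ε/2 := by
    intro n hn
    rw [Finset.sum_Ico_eq_sub _ hn]
    have h1 := hm n hn
    have h2 := hm m le_rfl
    rw [Real.dist_eq] at h1 h2
    have h1' := abs_lt.mp h1
    have h2' := abs_lt.mp h2
    linarith [h1'.1, h1'.2, h2'.1, h2'.2]
  have hA : Tendsto (fun n => (∑ i ∈ Finset.range m, a i) - ∑ i ∈ Finset.range n, a i)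
      atTop atBot := by
    apply tendsto_atBot_add_const_left
    exact tendsto_neg_atBot_iff.mpr hadiv
  have hexp : Tendsto (fun n => Real.exp ((∑ i ∈ Finset.range m, a i)
      - ∑ i ∈ Finset.range n, a i) * s m) atTop (nhds 0) := by
    have := (Real.tendsto_exp_atBot.comp hA).mul_const (s m)
    simpa using this
  obtain ⟨N, hN⟩ := Metric.tendsto_atTop.mp hexp (ε/2) (by positivity)
  refine ⟨max m N, fun n hn => ?_⟩
  have hmn : m ≤ n := le_trans (le_max_left _ _) hn
  have hNn : N ≤ n := le_trans (le_max_right _ _) hn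
  have hP : ∏ i ∈ Finset.Ico m n, (1 - a i) ≤
      Real.exp ((∑ i ∈ Finset.range m, a i) - ∑ i ∈ Finset.range n, a i) := by
    have h1 : ∏ i ∈ Finset.Ico m n, (1 - a i) ≤ ∏ i ∈ Finset.Ico m n, Real.exp (-a i) := by
      apply Finset.prod_le_prod
      · intro i _; linarith [(ha i).2]
      · intro i _; linarith [Real.add_one_le_exp (-a i)]
    have h2 : ∏ i ∈ Finset.Ico m n, Real.exp (-a i)
        = Real.exp ((∑ i ∈ Finset.range m, a i) - ∑ i ∈ Finset.range n, a i) := by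
      rw [← Real.exp_sum, Finset.sum_neg_distrib, Finset.sum_Ico_eq_sub _ hmn]
      ring_nf
    rw [h2] at h1; exact h1
  have hexp_lt : Real.exp ((∑ i ∈ Finset.range m, a i)
      - ∑ i ∈ Finset.range n, a i) * s m < ε/2 := by
    have := hN n hNn
    rw [Real.dist_eq, sub_zero] at this
    calc _ ≤ |Real.exp ((∑ i ∈ Finset.range m, a i)
        - ∑ i ∈ Finset.range n, a i) * s m| := le_abs_self _
    _ < ε/2 := this
  have hsn : s n ≤ (∏ i ∈ Finset.Ico m n, (1 - a i)) * s m + ∑ i ∈ Finset.Ico m n, c i :=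
    key m n hmn
  rw [Real.dist_eq, sub_zero, abs_of_nonneg (hs n)]
  have : (∏ i ∈ Finset.Ico m n, (1 - a i)) * s m ≤
      Real.exp ((∑ i ∈ Finset.range m, a i) - ∑ i ∈ Finset.range n, a i) * s m :=
    mul_le_mul_of_nonneg_right hP (hs m)
  linarith [htail n hmn]
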